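/- For each k ≥ 0, the universal coefficients c(Y) in the expansion B^k(b) = ∑_Y c(Y) Y(b) over all Young diagrams Y of total degree k sum to 1: ∑_{partitions of k} (−1)^{k+ℓ} · k!/((k₁!)^{ℓ₁}···(k_n!)^{ℓ_n}) · ℓ!/(ℓ₁!···ℓ_n!) = 1, where the sum is over partitions of k into parts k₁ > … > k_n with multiplicities ℓ₁, …, ℓ_n and ℓ = ℓ₁ + … + ℓ_n. -/

import Mathlib

open Multiset in
lemma lists_eq_biUnion {α : Type*} [DecidableEq α] (m : Multiset α) (hm : m ≠ 0) :
    m.lists.toFinset = m.toFinset.biUnion (fun a => ((m.erase a).lists.toFinset).image (a :: ·)) := by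
  ext l
  simp only [Multiset.mem_lists_iff, Finset.mem_biUnion, Finset.mem_image,
    Multiset.mem_toFinset]
  constructor
  · rintro rfl
    cases l with
    | nil => simp at hm
    | cons a t =>
      refine ⟨a, by simp, t, ?_, rfl⟩
      show Multiset.erase (a ::ₘ ↑t) a = ↑t
      rw [Multiset.erase_cons_head]
  · rintro ⟨a, ha, t, ht, rfl⟩
    rw [← Multiset.cons_erase ha, ht]
    rfl

lemma lists_card_mul {α : Type*} [DecidableEq α] :
    ∀ (n : ℕ) (m : Multiset α), Multiset.card m = n →
      m.lists.toFinset.card * ∏ i ∈ m.toFinset, (m.count i).factorial = n.factorial := by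
  intro n
  induction n with
  | zero =>
    intro m hm
    rw [Multiset.card_eq_zero] at hm
    subst hm
    rw [show (0 : Multiset α) = (([] : List α) : Multiset α) from rfl, Multiset.lists_coe]
    simp
  | succ n ih =>
    intro m hm
    have hm0 : m ≠ 0 := by
      intro h; subst h; simp at hm
    rw [lists_eq_biUnion m hm0]
    rw [Finset.card_biUnion (by
      intro a ha b hb hab
      simp only [Function.onFun]
      rw [Finset.disjoint_left]
      rintro l hl hl'
      simp only [Finset.mem_image] at hl hl'
      obtain ⟨t, _, rfl⟩ := hl
      obtain ⟨t', _, h⟩ := hl'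
      exact hab (by injection h.symm))]
    have himg : ∀ a, ((m.erase a).lists.toFinset.image (a :: ·)).card = (m.erase a).lists.toFinset.card := by
      intro a
      exact Finset.card_image_of_injective _ (fun x y h => by injection h)
    simp only [himg]
    rw [Finset.sum_mul]
    have hterm : ∀ a ∈ m.toFinset,
        (m.erase a).lists.toFinset.card * ∏ i ∈ m.toFinset, (m.count i).factorial
          = m.count a * n.factorial := by
      intro a ha
      rw [Multiset.mem_toFinset] at ha
      have hca : 1 ≤ m.count a := Multiset.one_le_count_iff_mem.mpr ha
      have hsub : (m.erase a).toFinset ⊆ m.toFinset :=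
        Multiset.toFinset_subset.mpr (Multiset.erase_subset a m)
      have hIH := ih (m.erase a) (by rw [Multiset.card_erase_of_mem ha, hm]; rfl)
      have hprod : ∏ i ∈ (m.erase a).toFinset, ((m.erase a).count i).factorial
          = ∏ i ∈ m.toFinset, ((m.erase a).count i).factorial := by
        apply Finset.prod_subset hsub
        intro i _ hi
        rw [Multiset.mem_toFinset, ← Multiset.count_pos, Nat.pos_iff_ne_zero,
          not_not] at hi
        rw [hi]; rfl
      have hsplit : ∏ i ∈ m.toFinset, (m.count i).factorial
          = m.count a * ∏ i ∈ m.toFinset, ((m.erase a).count i).factorial := by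
        rw [← Finset.prod_erase_mul _ _ (Multiset.mem_toFinset.mpr ha),
            ← Finset.prod_erase_mul _ _ (Multiset.mem_toFinset.mpr ha)]
        have h1 : ∀ i ∈ m.toFinset.erase a,
            ((m.erase a).count i).factorial = (m.count i).factorial := by
          intro i hi
          rw [Multiset.count_erase_of_ne (Finset.ne_of_mem_erase hi)]
        have hfac : (m.count a).factorial = m.count a * (m.count a - 1).factorial := by
          obtain ⟨c, hc⟩ : ∃ c, m.count a = c + 1 :=
            ⟨m.count a - 1, (Nat.succ_pred_eq_of_pos hca).symm⟩
          rw [hc]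
          simp [Nat.factorial_succ]
        rw [Finset.prod_congr rfl h1, Multiset.count_erase_self, hfac]
        ring
      rw [hsplit, ← mul_assoc, mul_comm ((m.erase a).lists.toFinset.card) (m.count a), mul_assoc,
          ← hprod, hIH]
    rw [Finset.sum_congr rfl hterm, ← Finset.sum_mul, Multiset.toFinset_sum_count_eq, hm,
        Nat.factorial_succ]

def Lset (k : ℕ) : Finset (List ℕ) :=
  (Finset.univ : Finset (Composition k)).image Composition.blocks

lemma mem_Lset {k : ℕ} {l : List ℕ} :
    l ∈ Lset k ↔ l.sum = k ∧ ∀ i ∈ l, 0 < i := by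
  simp only [Lset, Finset.mem_image, Finset.mem_univ, true_and]
  constructor
  · rintro ⟨c, rfl⟩
    exact ⟨c.blocks_sum, fun i hi => c.blocks_pos hi⟩
  · rintro ⟨h1, h2⟩
    exact ⟨⟨l, fun {i} hi => h2 i hi, h1⟩, rfl⟩

lemma Lset_zero : Lset 0 = {[]} := by
  ext l
  rw [mem_Lset]
  simp only [Finset.mem_singleton]
  constructor
  · rintro ⟨h1, h2⟩
    cases l with
    | nil => rfl
    | cons a t =>
      exfalso
      have := h2 a (by simp)
      simp only [List.sum_cons] at h1
      omega
  · rintro rfl; exact ⟨rfl, by simp⟩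

lemma Lset_succ (k : ℕ) :
    Lset (k + 1) = (Finset.Icc 1 (k + 1)).biUnion
      (fun a => (Lset (k + 1 - a)).image (a :: ·)) := by
  ext l
  simp only [Finset.mem_biUnion, Finset.mem_image, Finset.mem_Icc, mem_Lset]
  constructor
  · rintro ⟨h1, h2⟩
    cases l with
    | nil => simp at h1
    | cons a t =>
      have ha : 0 < a := h2 a (by simp)
      simp only [List.sum_cons] at h1
      refine ⟨a, ⟨ha, by omega⟩, t, ⟨by omega, fun i hi => h2 i (by simp [hi])⟩, rfl⟩
  · rintro ⟨a, ⟨ha1, ha2⟩, t, ⟨ht1, ht2⟩, rfl⟩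
    refine ⟨by simp [List.sum_cons]; omega, ?_⟩
    intro i hi
    rcases List.mem_cons.mp hi with rfl | h
    · omega
    · exact ht2 i h

lemma prod_factorial_ne_zero (t : List ℕ) : (((t.map Nat.factorial).prod : ℕ) : ℚ) ≠ 0 := by
  rw [Nat.cast_ne_zero]
  apply Nat.pos_iff_ne_zero.mp
  apply List.prod_pos
  intro x hx
  simp only [List.mem_map] at hx
  obtain ⟨y, _, rfl⟩ := hx
  exact Nat.factorial_pos y

lemma F_eq (k : ℕ) :
    (k.factorial : ℚ) * ∑ l ∈ Lset k,
      (-1 : ℚ) ^ l.length / (((l.map Nat.factorial).prod : ℕ) : ℚ) = (-1) ^ k := by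
  induction k using Nat.strong_induction_on with
  | _ k ih =>
    match k with
    | 0 => rw [Lset_zero]; simp
    | (n + 1) =>
      rw [Lset_succ]
      rw [Finset.sum_biUnion (by
        intro a ha b hb hab
        simp only [Function.onFun]
        rw [Finset.disjoint_left]
        rintro l hl hl'
        simp only [Finset.mem_image] at hl hl'
        obtain ⟨t, _, rfl⟩ := hl
        obtain ⟨t', _, h⟩ := hl'
        exact hab (by injection h.symm))]
      rw [Finset.mul_sum]
      have key : ∀ a ∈ Finset.Icc 1 (n + 1),
          ((n + 1).factorial : ℚ) * ∑ l ∈ (Lset (n + 1 - a)).image (a :: ·),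
              (-1 : ℚ) ^ l.length / (((l.map Nat.factorial).prod : ℕ) : ℚ)
            = -(((n + 1).choose a : ℕ) : ℚ) * (-1) ^ (n + 1 - a) := by
        intro a ha
        rw [Finset.mem_Icc] at ha
        rw [Finset.sum_image (fun x _ y _ h => by injection h)]
        have hterm : ∀ t ∈ Lset (n + 1 - a),
            (-1 : ℚ) ^ (a :: t).length / ((((a :: t).map Nat.factorial).prod : ℕ) : ℚ)
              = -((a.factorial : ℚ))⁻¹ *
                ((-1 : ℚ) ^ t.length / (((t.map Nat.factorial).prod : ℕ) : ℚ)) := by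
          intro t _
          have h1 : ((((a :: t).map Nat.factorial).prod : ℕ) : ℚ)
              = (a.factorial : ℚ) * (((t.map Nat.factorial).prod : ℕ) : ℚ) := by
            push_cast [List.map_cons, List.prod_cons]
            ring
          rw [h1, List.length_cons, pow_succ]
          have h2 := prod_factorial_ne_zero t
          have h3 : (a.factorial : ℚ) ≠ 0 := Nat.cast_ne_zero.mpr a.factorial_ne_zero
          field_simp
          try ring
        rw [Finset.sum_congr rfl hterm, ← Finset.mul_sum]
        have hih := ih (n + 1 - a) (by omega)
        have h4 : (((n + 1 - a).factorial : ℕ) : ℚ) ≠ 0 :=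
          Nat.cast_ne_zero.mpr (n + 1 - a).factorial_ne_zero
        have hS : ∑ t ∈ Lset (n + 1 - a),
            (-1 : ℚ) ^ t.length / (((t.map Nat.factorial).prod : ℕ) : ℚ)
              = (-1) ^ (n + 1 - a) / ((n + 1 - a).factorial : ℚ) := by
          rw [eq_div_iff h4, mul_comm, hih]
        rw [hS, Nat.cast_choose ℚ ha.2]
        have h3 : (a.factorial : ℚ) ≠ 0 := Nat.cast_ne_zero.mpr a.factorial_ne_zero
        have h5 : ((n + 1).factorial : ℚ) ≠ 0 :=
          Nat.cast_ne_zero.mpr (n + 1).factorial_ne_zero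
        field_simp
        try ring
      rw [Finset.sum_congr rfl key]
      have hsign : ∀ a ∈ Finset.Icc 1 (n + 1),
          -(((n + 1).choose a : ℕ) : ℚ) * (-1) ^ (n + 1 - a)
            = -(-1 : ℚ) ^ (n + 1) * ((-1) ^ a * (((n + 1).choose a : ℕ) : ℚ)) := by
        intro a ha
        rw [Finset.mem_Icc] at ha
        have : (-1 : ℚ) ^ (n + 1 - a) * (-1) ^ a = (-1) ^ (n + 1) := by
          rw [← pow_add]
          congr 1
          omega
        have ha2 : (-1 : ℚ) ^ a * (-1) ^ a = 1 := by
          rw [← pow_add, ← two_mul, pow_mul]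
          norm_num
        have h6 : (-1 : ℚ) ^ (n + 1 - a) = (-1) ^ (n + 1) * (-1) ^ a := by
          calc (-1 : ℚ) ^ (n + 1 - a) = (-1) ^ (n + 1 - a) * ((-1) ^ a * (-1) ^ a) := by
                rw [ha2, mul_one]
            _ = ((-1) ^ (n + 1 - a) * (-1) ^ a) * (-1) ^ a := by ring
            _ = (-1) ^ (n + 1) * (-1) ^ a := by rw [this]
        rw [h6]
        ring
      rw [Finset.sum_congr rfl hsign, ← Finset.mul_sum]
      have halt : ∑ i ∈ Finset.range (n + 2), (-1 : ℚ) ^ i * (((n + 1).choose i : ℕ) : ℚ) = 0 := by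
        have := Int.alternating_sum_range_choose_of_ne (n := n + 1) (by omega)
        exact_mod_cast this
      have hIcc : ∑ a ∈ Finset.Icc 1 (n + 1), (-1 : ℚ) ^ a * (((n + 1).choose a : ℕ) : ℚ)
          = -1 := by
        have hsplit := Finset.sum_range_succ' (fun i => (-1 : ℚ) ^ i * (((n + 1).choose i : ℕ) : ℚ)) (n + 1)
        rw [halt] at hsplit
        have hre : ∑ a ∈ Finset.Icc 1 (n + 1), (-1 : ℚ) ^ a * (((n + 1).choose a : ℕ) : ℚ)
            = ∑ i ∈ Finset.range (n + 1), (-1 : ℚ) ^ (1 + i) * (((n + 1).choose (1 + i) : ℕ) : ℚ) := by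
          rw [← Finset.Ico_add_one_right_eq_Icc, Finset.sum_Ico_eq_sum_range]
          norm_num
        rw [hre]
        have : ∀ i ∈ Finset.range (n + 1),
            (-1 : ℚ) ^ (1 + i) * (((n + 1).choose (1 + i) : ℕ) : ℚ)
              = (-1 : ℚ) ^ (i + 1) * (((n + 1).choose (i + 1) : ℕ) : ℚ) := by
          intro i _
          rw [add_comm 1 i]
        rw [Finset.sum_congr rfl this]
        simp only [Nat.choose_zero_right, Nat.cast_one, pow_zero, one_mul] at hsplit
        linarith
      rw [hIcc]
      ring

lemma Lset_eq_biUnion_partitions (k : ℕ) :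
    Lset k = (Finset.univ : Finset (Nat.Partition k)).biUnion (fun p => p.parts.lists.toFinset) := by
  ext l
  simp only [mem_Lset, Finset.mem_biUnion, Finset.mem_univ, true_and,
    Multiset.mem_toFinset, Multiset.mem_lists_iff]
  constructor
  · rintro ⟨h1, h2⟩
    exact ⟨⟨(l : Multiset ℕ), fun {i} hi => h2 i (by exact_mod_cast hi), by
      simpa using h1⟩, rfl⟩
  · rintro ⟨p, hp⟩
    constructor
    · have := p.parts_sum
      rw [hp] at this
      simpa using this
    · intro i hi
      exact p.parts_pos (by rw [hp]; exact_mod_cast hi)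

/-- The universal coefficients `c(Y) = (−1)^{k+ℓ} · k!/∏(kⱼ!)^{ℓⱼ} · ℓ!/∏ℓⱼ!`
of the change-of-basis formula for discrete polynomials, summed over all Young
diagrams (partitions) of total degree `k`, add up to `1`. Here a partition `p`
of `k` has parts `p.parts` (a multiset), `ℓ = card p.parts`, the first
multinomial is `k!` over the product of the factorials of all parts, and the
second is `ℓ!` over the product of the factorials of the multiplicities. -/
theorem young_coefficients_sum_to_one (k : ℕ) :
    ∑ p : Nat.Partition k,
      ((-1 : ℚ) ^ (k + Multiset.card p.parts)
        * (k.factorial : ℚ) / (((p.parts.map Nat.factorial).prod : ℕ) : ℚ)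
        * ((Multiset.card p.parts).factorial : ℚ)
        / ∏ i ∈ p.parts.toFinset, ((p.parts.count i).factorial : ℚ)) = 1 := by
  have hterm : ∀ p : Nat.Partition k,
      ((-1 : ℚ) ^ (k + Multiset.card p.parts)
        * (k.factorial : ℚ) / (((p.parts.map Nat.factorial).prod : ℕ) : ℚ)
        * ((Multiset.card p.parts).factorial : ℚ)
        / ∏ i ∈ p.parts.toFinset, ((p.parts.count i).factorial : ℚ))
      = ∑ l ∈ p.parts.lists.toFinset, (-1 : ℚ) ^ k * (k.factorial : ℚ)
          * ((-1 : ℚ) ^ l.length / (((l.map Nat.factorial).prod : ℕ) : ℚ)) := by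
    intro p
    have hcount := lists_card_mul (Multiset.card p.parts) p.parts rfl
    have hprodne : (∏ i ∈ p.parts.toFinset, ((p.parts.count i).factorial : ℚ)) ≠ 0 := by
      apply Finset.prod_ne_zero_iff.mpr
      intro i _
      exact Nat.cast_ne_zero.mpr (Nat.factorial_ne_zero _)
    have hcast : ((p.parts.lists.toFinset.card : ℚ)) *
        ∏ i ∈ p.parts.toFinset, ((p.parts.count i).factorial : ℚ)
          = ((Multiset.card p.parts).factorial : ℚ) := by
      rw [← Nat.cast_prod]
      exact_mod_cast congrArg (Nat.cast : ℕ → ℚ) hcount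
    have hdiv : ((Multiset.card p.parts).factorial : ℚ)
        / ∏ i ∈ p.parts.toFinset, ((p.parts.count i).factorial : ℚ)
          = (p.parts.lists.toFinset.card : ℚ) := by
      rw [← hcast, mul_div_assoc, div_self hprodne, mul_one]
    have hconst : ∀ l ∈ p.parts.lists.toFinset,
        (-1 : ℚ) ^ k * (k.factorial : ℚ)
            * ((-1 : ℚ) ^ l.length / (((l.map Nat.factorial).prod : ℕ) : ℚ))
          = (-1 : ℚ) ^ (k + Multiset.card p.parts)
            * (k.factorial : ℚ) / (((p.parts.map Nat.factorial).prod : ℕ) : ℚ) := by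
      intro l hl
      rw [Multiset.mem_toFinset, Multiset.mem_lists_iff] at hl
      have hlen : l.length = Multiset.card p.parts := by rw [hl]; simp
      have hprod : (p.parts.map Nat.factorial).prod = (l.map Nat.factorial).prod := by
        rw [hl]
        simp
      rw [hlen, hprod, pow_add]
      ring
    rw [Finset.sum_congr rfl hconst, Finset.sum_const, nsmul_eq_mul]
    rw [mul_div_assoc _ ((Multiset.card p.parts).factorial : ℚ), hdiv]
    ring
  rw [Finset.sum_congr rfl (fun p _ => hterm p)]
  rw [← Finset.sum_biUnion (by
    intro p hp q hq hpq
    simp only [Function.onFun]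
    rw [Finset.disjoint_left]
    rintro l hl hl'
    rw [Multiset.mem_toFinset, Multiset.mem_lists_iff] at hl hl'
    exact hpq (Nat.Partition.ext (hl.trans hl'.symm)))]
  rw [← Lset_eq_biUnion_partitions]
  have := F_eq k
  calc ∑ l ∈ Lset k, (-1 : ℚ) ^ k * (k.factorial : ℚ)
        * ((-1 : ℚ) ^ l.length / (((l.map Nat.factorial).prod : ℕ) : ℚ))
      = (-1 : ℚ) ^ k * ((k.factorial : ℚ) * ∑ l ∈ Lset k,
          (-1 : ℚ) ^ l.length / (((l.map Nat.factorial).prod : ℕ) : ℚ)) := by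
        rw [Finset.mul_sum, Finset.mul_sum]
        apply Finset.sum_congr rfl
        intro l _
        ring
    _ = (-1 : ℚ) ^ k * (-1 : ℚ) ^ k := by rw [this]
    _ = 1 := by
        rw [← pow_add, ← two_mul, pow_mul]
        norm_num
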